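/- arXiv:0806.3722 — 2 statements merged into one kernel-verified Lean document; each statement's English description precedes it below -/
import Mathlib

section
/- Let F1 and F1' be finite subsets of ℤ², both uniquely determined by their line sums. Suppose points (x_1,y_1), (x_2,y_2), …, (x_t,y_t) all lie in F1 \ F1' and points (x_2,y_1), (x_3,y_2), …, (x_t,y_{t−1}) all lie in F1' \ F1. Then r_{x_1}(F1) > r_{x_2}(F1) > … > r_{x_t}(F1) and r_{x_1}(F1') < r_{x_2}(F1') < … < r_{x_t}(F1'); consequently Σ_{s=1}^{t} |r_{x_s}(F1') − r_{x_s}(F1)| ≥ ⌊t²/2⌋. -/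
open Finset

/-- The row sum `r_i(F)`: the number of elements of `F` in row `i`. -/
def rowSum (F : Finset (ℤ × ℤ)) (i : ℤ) : ℤ :=
  ((F.filter fun p => p.1 = i).card : ℤ)

/-- The column sum `c_j(F)`: the number of elements of `F` in column `j`. -/
def colSum (F : Finset (ℤ × ℤ)) (j : ℤ) : ℤ :=
  ((F.filter fun p => p.2 = j).card : ℤ)

/-- `F` is uniquely determined by its line sums. -/
def uniquelyDetermined (F : Finset (ℤ × ℤ)) : Prop :=
  ∀ F' : Finset (ℤ × ℤ),
    (∀ i, rowSum F' i = rowSum F i) → (∀ j, colSum F' j = colSum F j) → F' = F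

/-- `Σ_j |c_j(F1) − c_j(F2)| + Σ_i |r_i(F1) − r_i(F2)|`; the sums over all of `ℤ`
reduce to the finite index sets below, since all other terms vanish. -/
def lineDiff (F1 F2 : Finset (ℤ × ℤ)) : ℤ :=
  (∑ j ∈ (F1 ∪ F2).image Prod.snd, |colSum F1 j - colSum F2 j|)
    + ∑ i ∈ (F1 ∪ F2).image Prod.fst, |rowSum F1 i - rowSum F2 i|

/-- `α(F1, F2)`. -/
noncomputable def alpha (F1 F2 : Finset (ℤ × ℤ)) : ℝ :=
  (lineDiff F1 F2 : ℝ) / 2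

/-!
Switching a rectangle `(a, b), (a', b') ∈ F`, `(a, b'), (a', b) ∉ F` to its opposite corners
preserves all line sums, so a uniquely determined `F` has no such rectangle. Hence if
`(a, b) ∈ F` and `(a', b) ∉ F`, row `a'` embeds column-wise into row `a` minus `(a, b)`, and
`r_{a'}(F) < r_a(F)`. Along the staircase this makes the row sums of `F1` strictly decrease and
those of `F1'` strictly increase, so `A_s = r_{x_s}(F1') - r_{x_s}(F1)` grows by at least `2` per
step. Then `|A_1| + |A_t| ≥ A_t - A_1 ≥ 2(t - 1)`, and peeling off both ends inductively gives
`Σ |A_s| ≥ ⌊t²/2⌋`.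
-/

lemma rowSum_eq_sum (F : Finset (ℤ × ℤ)) (i : ℤ) :
    rowSum F i = ∑ p ∈ F, if p.1 = i then 1 else 0 := by
  simp [rowSum, Finset.sum_boole]

lemma colSum_eq_sum (F : Finset (ℤ × ℤ)) (j : ℤ) :
    colSum F j = ∑ p ∈ F, if p.2 = j then 1 else 0 := by
  simp [colSum, Finset.sum_boole]

def switch (F : Finset (ℤ × ℤ)) (a a' b b' : ℤ) : Finset (ℤ × ℤ) :=
  insert (a, b') (insert (a', b) ((F.erase (a, b)).erase (a', b')))

section Switch

variable {F : Finset (ℤ × ℤ)} {a a' b b' : ℤ}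

lemma sum_switch {M : Type*} [AddCommGroup M] (h₁ : (a, b) ∈ F) (h₂ : (a', b') ∈ F)
    (h₃ : (a, b') ∉ F) (h₄ : (a', b) ∉ F) (f : ℤ × ℤ → M) :
    ∑ p ∈ switch F a a' b b', f p + (f (a, b) + f (a', b')) =
      ∑ p ∈ F, f p + (f (a, b') + f (a', b)) := by
  have ha : a ≠ a' := by rintro rfl; exact h₄ h₁
  have h₂' : (a', b') ∈ F.erase (a, b) := mem_erase.2 ⟨by simp [ha.symm], h₂⟩
  have h₃' : (a, b') ∉ insert (a', b) ((F.erase (a, b)).erase (a', b')) := by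
    simp [ha, h₃]
  have h₄' : (a', b) ∉ (F.erase (a, b)).erase (a', b') := fun h =>
    h₄ (mem_of_mem_erase (mem_of_mem_erase h))
  rw [switch, sum_insert h₃', sum_insert h₄', ← sum_erase_add _ _ h₁,
    ← sum_erase_add _ _ h₂']
  abel

lemma rowSum_switch (h₁ : (a, b) ∈ F) (h₂ : (a', b') ∈ F) (h₃ : (a, b') ∉ F)
    (h₄ : (a', b) ∉ F) (i : ℤ) : rowSum (switch F a a' b b') i = rowSum F i := by
  have := sum_switch h₁ h₂ h₃ h₄ fun p => if p.1 = i then (1 : ℤ) else 0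
  rw [rowSum_eq_sum, rowSum_eq_sum]
  simpa [add_comm] using this

lemma colSum_switch (h₁ : (a, b) ∈ F) (h₂ : (a', b') ∈ F) (h₃ : (a, b') ∉ F)
    (h₄ : (a', b) ∉ F) (j : ℤ) : colSum (switch F a a' b b') j = colSum F j := by
  have := sum_switch h₁ h₂ h₃ h₄ fun p => if p.2 = j then (1 : ℤ) else 0
  rw [colSum_eq_sum, colSum_eq_sum]
  simpa [add_comm] using this

end Switch

namespace uniquelyDetermined

variable {F : Finset (ℤ × ℤ)} {a a' b b' : ℤ}

lemma mem_of_mem_of_mem_of_notMem (hF : uniquelyDetermined F) (h₁ : (a, b) ∈ F)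
    (h₂ : (a', b') ∈ F) (h₃ : (a, b') ∉ F) : (a', b) ∈ F := by
  by_contra h₄
  have hswitch := hF _ (rowSum_switch h₁ h₂ h₃ h₄) (colSum_switch h₁ h₂ h₃ h₄)
  exact h₃ (hswitch ▸ mem_insert_self _ _)

lemma rowSum_lt_of_mem_of_notMem (hF : uniquelyDetermined F) (h₁ : (a, b) ∈ F)
    (h₂ : (a', b) ∉ F) : rowSum F a' < rowSum F a := by
  set shift : ℤ × ℤ → ℤ × ℤ := fun p => (a, p.2)
  have hsub : (F.filter (·.1 = a')).image shift ⊂ F.filter (·.1 = a) := by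
    rw [ssubset_iff_of_subset]
    · refine ⟨(a, b), by simp [h₁], ?_⟩
      simp only [mem_image, mem_filter, shift, Prod.mk.injEq]
      rintro ⟨⟨i, j⟩, ⟨hp, rfl⟩, -, rfl⟩
      exact h₂ hp
    · simp only [subset_iff, mem_image, mem_filter, shift]
      rintro _ ⟨⟨i, j⟩, ⟨hp, rfl⟩, rfl⟩
      exact ⟨hF.mem_of_mem_of_mem_of_notMem hp h₁ h₂, rfl⟩
  have hinj : Set.InjOn shift (F.filter (·.1 = a')) := by
    rintro ⟨i, j⟩ hp ⟨i', j'⟩ hq h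
    simp only [mem_coe, mem_filter, shift, Prod.mk.injEq] at hp hq h
    simp [hp.2, hq.2, h.2]
  rw [rowSum, rowSum, ← card_image_of_injOn hinj]
  exact_mod_cast card_lt_card hsub

end uniquelyDetermined

lemma add_two_mul_le_of_add_two_le {A : ℕ → ℤ} {t : ℕ}
    (hA : ∀ s, s + 1 < t → A s + 2 ≤ A (s + 1)) {i j : ℕ} (hij : i ≤ j) (hj : j < t) :
    A i + 2 * (j - i : ℤ) ≤ A j := by
  have hmono : MonotoneOn (fun s : ℕ => A s - 2 * s) (Set.Iio t) :=
    monotoneOn_of_le_add_one Set.ordConnected_Iio fun s _ _ hs => by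
      have := hA s hs
      push_cast
      linarith
  have := hmono (lt_of_le_of_lt hij hj) hj hij
  simp only at this
  linarith

theorem sq_div_two_le_sum_abs_of_add_two_le {A : ℕ → ℤ} {t : ℕ}
    (hA : ∀ s, s + 1 < t → A s + 2 ≤ A (s + 1)) :
    ((t ^ 2 / 2 : ℕ) : ℤ) ≤ ∑ s ∈ range t, |A s| := by
  induction t using Nat.twoStepInduction generalizing A with
  | zero => simp
  | one => simp
  | more n ih _ =>
    have hinner := ih (A := fun s => A (s + 1)) fun s hs => hA (s + 1) (by omega)
    have hends : A 0 + 2 * (n + 1 : ℤ) ≤ A (n + 1) := by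
      simpa using add_two_mul_le_of_add_two_le hA (Nat.zero_le (n + 1)) (by omega)
    have hsq : (n + 2) ^ 2 / 2 = n ^ 2 / 2 + (2 * n + 2) := by
      rw [show (n + 2) ^ 2 = n ^ 2 + (2 * n + 2) * 2 by ring, Nat.add_mul_div_right _ _ two_pos]
    rw [sum_range_succ, sum_range_succ', hsq]
    push_cast at hinner ⊢
    linarith [neg_abs_le (A 0), le_abs_self (A (n + 1))]

lemma sum_Icc_one_eq_sum_range {M : Type*} [AddCommMonoid M] (f : ℕ → M) (t : ℕ) :
    ∑ s ∈ Icc 1 t, f s = ∑ s ∈ range t, f (s + 1) := by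
  rw [range_eq_Ico, sum_Ico_add' f 0 t 1, zero_add, Ico_add_one_right_eq_Icc]

/-- If `F1` and `F1'` are both uniquely determined and the points `(x_s, y_s)`,
`1 ≤ s ≤ t`, lie in `F1 \\ F1'` while the points `(x_{s+1}, y_s)`, `1 ≤ s ≤ t-1`, lie in
`F1' \\ F1`, then the row sums of `F1` strictly decrease and those of `F1'` strictly
increase along the rows `x_1, …, x_t`; consequently
`Σ_{s=1}^{t} |r_{x_s}(F1') − r_{x_s}(F1)| ≥ ⌊t²/2⌋`. -/
theorem staircase_two_unique (F1 F1' : Finset (ℤ × ℤ))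
    (hF1 : uniquelyDetermined F1) (hF1' : uniquelyDetermined F1')
    (t : ℕ) (x y : ℕ → ℤ)
    (hin : ∀ s : ℕ, 1 ≤ s → s ≤ t → (x s, y s) ∈ F1 ∧ (x s, y s) ∉ F1')
    (hout : ∀ s : ℕ, 1 ≤ s → s < t → (x (s + 1), y s) ∈ F1' ∧ (x (s + 1), y s) ∉ F1) :
    (∀ s s' : ℕ, 1 ≤ s → s < s' → s' ≤ t → rowSum F1 (x s') < rowSum F1 (x s)) ∧
    (∀ s s' : ℕ, 1 ≤ s → s < s' → s' ≤ t → rowSum F1' (x s) < rowSum F1' (x s')) ∧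
    ((t ^ 2 / 2 : ℕ) : ℤ) ≤ ∑ s ∈ Finset.Icc 1 t, |rowSum F1' (x s) - rowSum F1 (x s)| := by
  have hstep : ∀ s, 1 ≤ s → s < t →
      rowSum F1 (x (s + 1)) < rowSum F1 (x s) ∧ rowSum F1' (x s) < rowSum F1' (x (s + 1)) :=
    fun s h₁ h₂ =>
      ⟨hF1.rowSum_lt_of_mem_of_notMem (hin s h₁ h₂.le).1 (hout s h₁ h₂).2,
        hF1'.rowSum_lt_of_mem_of_notMem (hout s h₁ h₂).1 (hin s h₁ h₂.le).2⟩
  have hanti : StrictAntiOn (fun s => rowSum F1 (x s)) (Set.Icc 1 t) :=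
    strictAntiOn_of_add_one_lt Set.ordConnected_Icc fun s _ hs hs' => (hstep s hs.1 hs'.2).1
  have hmono : StrictMonoOn (fun s => rowSum F1' (x s)) (Set.Icc 1 t) :=
    strictMonoOn_of_lt_add_one Set.ordConnected_Icc fun s _ hs hs' => (hstep s hs.1 hs'.2).2
  refine ⟨fun s s' h₁ h₂ h₃ => hanti ⟨h₁, by omega⟩ ⟨by omega, h₃⟩ h₂,
    fun s s' h₁ h₂ h₃ => hmono ⟨h₁, by omega⟩ ⟨by omega, h₃⟩ h₂, ?_⟩
  rw [sum_Icc_one_eq_sum_range]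
  refine sq_div_two_le_sum_abs_of_add_two_le fun s hs => ?_
  have := hstep (s + 1) (by omega) hs
  omega
end

section
/- Let F2 and F3 be finite subsets of ℤ² with the same row sums and the same column sums, and let F1 be a finite subset of ℤ², uniquely determined by its line sums, with |F1| = |F2|. Then α(F1, F2) = α(F1, F3), and consequently |F2 △ F3| ≤ 2·α(F1,F2)·√(8|F2| + 1) − 2·α(F1,F2). -/
open Finset

open scoped symmDiff


section Basic
variable {F F1 F2 G : Finset (ℤ × ℤ)} {i j : ℤ}

lemma rowSum_nonneg (F : Finset (ℤ × ℤ)) (i : ℤ) : 0 ≤ rowSum F i := Int.natCast_nonneg _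
lemma colSum_nonneg (F : Finset (ℤ × ℤ)) (j : ℤ) : 0 ≤ colSum F j := Int.natCast_nonneg _

lemma rowSum_insert {p : ℤ × ℤ} (hp : p ∉ F) (i : ℤ) :
    rowSum (insert p F) i = rowSum F i + if p.1 = i then 1 else 0 := by
  unfold rowSum
  rw [Finset.filter_insert]
  split_ifs with h
  · rw [Finset.card_insert_of_notMem (fun hc => hp (Finset.mem_filter.mp hc).1)]
    push_cast; ring
  · simp

lemma colSum_insert {p : ℤ × ℤ} (hp : p ∉ F) (j : ℤ) :
    colSum (insert p F) j = colSum F j + if p.2 = j then 1 else 0 := by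
  unfold colSum
  rw [Finset.filter_insert]
  split_ifs with h
  · rw [Finset.card_insert_of_notMem (fun hc => hp (Finset.mem_filter.mp hc).1)]
    push_cast; ring
  · simp

lemma rowSum_erase {p : ℤ × ℤ} (hp : p ∈ F) (i : ℤ) :
    rowSum (F.erase p) i = rowSum F i - if p.1 = i then 1 else 0 := by
  unfold rowSum
  rw [Finset.filter_erase]
  split_ifs with h
  · have hm : p ∈ F.filter fun q => q.1 = i := Finset.mem_filter.mpr ⟨hp, h⟩
    rw [Finset.card_erase_of_mem hm]
    have h1 : 1 ≤ (F.filter fun q => q.1 = i).card := Finset.card_pos.mpr ⟨p, hm⟩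
    push_cast [Nat.cast_sub h1]
    ring
  · have hnm : p ∉ F.filter fun q => q.1 = i := fun hc => h (Finset.mem_filter.mp hc).2
    rw [Finset.erase_eq_of_notMem hnm]
    simp

lemma colSum_erase {p : ℤ × ℤ} (hp : p ∈ F) (j : ℤ) :
    colSum (F.erase p) j = colSum F j - if p.2 = j then 1 else 0 := by
  unfold colSum
  rw [Finset.filter_erase]
  split_ifs with h
  · have hm : p ∈ F.filter fun q => q.2 = j := Finset.mem_filter.mpr ⟨hp, h⟩
    rw [Finset.card_erase_of_mem hm]
    have h1 : 1 ≤ (F.filter fun q => q.2 = j).card := Finset.card_pos.mpr ⟨p, hm⟩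
    push_cast [Nat.cast_sub h1]
    ring
  · have hnm : p ∉ F.filter fun q => q.2 = j := fun hc => h (Finset.mem_filter.mp hc).2
    rw [Finset.erase_eq_of_notMem hnm]
    simp

lemma exists_row_mem (h : rowSum G i < rowSum F i) : ∃ p, p ∈ F ∧ p ∉ G ∧ p.1 = i := by
  by_contra hc
  push_neg at hc
  have hsub : (F.filter fun p => p.1 = i) ⊆ G.filter fun p => p.1 = i := by
    intro p hp
    rw [Finset.mem_filter] at hp ⊢
    refine ⟨?_, hp.2⟩
    by_contra hg
    exact (hc p hp.1 hg) hp.2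
  have := Finset.card_le_card hsub
  unfold rowSum at h
  omega
-- omega with casts? h : (a:ℤ) < b with a b nats: zify; use exact_mod_cast
lemma exists_col_mem (h : colSum G j < colSum F j) : ∃ p, p ∈ F ∧ p ∉ G ∧ p.2 = j := by
  by_contra hc
  push_neg at hc
  have hsub : (F.filter fun p => p.2 = j) ⊆ G.filter fun p => p.2 = j := by
    intro p hp
    rw [Finset.mem_filter] at hp ⊢
    refine ⟨?_, hp.2⟩
    by_contra hg
    exact (hc p hp.1 hg) hp.2
  have := Finset.card_le_card hsub
  unfold colSum at h
  omega

lemma rowSum_eq_zero (h : i ∉ F.image Prod.fst) : rowSum F i = 0 := by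
  unfold rowSum
  rw [Finset.filter_eq_empty_iff.mpr]
  · simp
  · intro p hp hpi
    exact h (Finset.mem_image.mpr ⟨p, hp, hpi⟩)

lemma colSum_eq_zero (h : j ∉ F.image Prod.snd) : colSum F j = 0 := by
  unfold colSum
  rw [Finset.filter_eq_empty_iff.mpr]
  · simp
  · intro p hp hpj
    exact h (Finset.mem_image.mpr ⟨p, hp, hpj⟩)

lemma mem_image_fst_of_rowSum_pos (h : 0 < rowSum F i) : i ∈ F.image Prod.fst := by
  by_contra hc
  rw [rowSum_eq_zero hc] at h
  omega

lemma mem_image_snd_of_colSum_pos (h : 0 < colSum F j) : j ∈ F.image Prod.snd := by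
  by_contra hc
  rw [colSum_eq_zero hc] at h
  omega

lemma lineDiff_eq (F1 F2 : Finset (ℤ × ℤ)) {S T : Finset ℤ}
    (hS : ((F1 ∪ F2).image Prod.snd) ⊆ S) (hT : ((F1 ∪ F2).image Prod.fst) ⊆ T) :
    lineDiff F1 F2 = (∑ j ∈ S, |colSum F1 j - colSum F2 j|)
      + ∑ i ∈ T, |rowSum F1 i - rowSum F2 i| := by
  unfold lineDiff
  congr 1
  · refine Finset.sum_subset hS (fun j _ hj => ?_)
    have h1 : colSum F1 j = 0 := colSum_eq_zero
      (fun hc => hj (Finset.image_subset_image Finset.subset_union_left hc))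
    have h2 : colSum F2 j = 0 := colSum_eq_zero
      (fun hc => hj (Finset.image_subset_image Finset.subset_union_right hc))
    simp [h1, h2]
  · refine Finset.sum_subset hT (fun i _ hi => ?_)
    have h1 : rowSum F1 i = 0 := rowSum_eq_zero
      (fun hc => hi (Finset.image_subset_image Finset.subset_union_left hc))
    have h2 : rowSum F2 i = 0 := rowSum_eq_zero
      (fun hc => hi (Finset.image_subset_image Finset.subset_union_right hc))
    simp [h1, h2]

lemma lineDiff_nonneg (F1 F2 : Finset (ℤ × ℤ)) : 0 ≤ lineDiff F1 F2 := by
  unfold lineDiff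
  have h1 : (0:ℤ) ≤ ∑ j ∈ (F1 ∪ F2).image Prod.snd, |colSum F1 j - colSum F2 j| :=
    Finset.sum_nonneg (fun j _ => abs_nonneg _)
  have h2 : (0:ℤ) ≤ ∑ i ∈ (F1 ∪ F2).image Prod.fst, |rowSum F1 i - rowSum F2 i| :=
    Finset.sum_nonneg (fun i _ => abs_nonneg _)
  omega

end Basic

section RowSet
variable {F F1 : Finset (ℤ × ℤ)} {i j : ℤ}

def rowSet (F : Finset (ℤ × ℤ)) (i : ℤ) : Finset ℤ :=
  (F.filter fun p => p.1 = i).image Prod.snd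

lemma mem_rowSet : j ∈ rowSet F i ↔ (i, j) ∈ F := by
  simp only [rowSet, Finset.mem_image, Finset.mem_filter]
  constructor
  · rintro ⟨⟨a, b⟩, ⟨hab, ha⟩, hb⟩
    simp only at ha hb
    subst ha; subst hb; exact hab
  · intro h; exact ⟨(i, j), ⟨h, rfl⟩, rfl⟩

def Nested (F : Finset (ℤ × ℤ)) : Prop :=
  ∀ i i', rowSet F i ⊆ rowSet F i' ∨ rowSet F i' ⊆ rowSet F i

def classes (F : Finset (ℤ × ℤ)) : Finset (Finset ℤ) :=
  (F.image Prod.fst).image (rowSet F)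

def Q (F : Finset (ℤ × ℤ)) : ℕ := (classes F).card

def rank (F : Finset (ℤ × ℤ)) (i : ℤ) : ℕ :=
  ((classes F).filter (fun S => S ⊆ rowSet F i)).card

def corank (F : Finset (ℤ × ℤ)) (i : ℤ) : ℕ :=
  ((classes F).filter (fun S => ¬ S ⊆ rowSet F i)).card

lemma rank_add_corank (F : Finset (ℤ × ℤ)) (i : ℤ) : rank F i + corank F i = Q F :=
  Finset.card_filter_add_card_filter_not _

lemma rank_le_Q (F : Finset (ℤ × ℤ)) (i : ℤ) : rank F i ≤ Q F :=
  Finset.card_le_card (Finset.filter_subset _ _)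

lemma rowSet_mem_classes {p : ℤ × ℤ} (hp : p ∈ F) : rowSet F p.1 ∈ classes F :=
  Finset.mem_image_of_mem _ (Finset.mem_image_of_mem _ hp)

lemma rankF_pos {p : ℤ × ℤ} (hp : p ∈ F) : 1 ≤ rank F p.1 :=
  Finset.card_pos.mpr ⟨rowSet F p.1,
    Finset.mem_filter.mpr ⟨rowSet_mem_classes hp, Finset.Subset.refl _⟩⟩

lemma rankF_lt {p : ℤ × ℤ} (hp : p ∈ F) {i₂ : ℤ} (h : rowSet F i₂ ⊂ rowSet F p.1) :
    rank F i₂ < rank F p.1 := by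
  apply Finset.card_lt_card
  rw [Finset.ssubset_iff_of_subset]
  · exact ⟨rowSet F p.1, Finset.mem_filter.mpr ⟨rowSet_mem_classes hp, Finset.Subset.refl _⟩,
      fun hc => h.not_subset (Finset.mem_filter.mp hc).2⟩
  · intro S hS
    rw [Finset.mem_filter] at hS ⊢
    exact ⟨hS.1, hS.2.trans h.subset⟩

lemma corankF_pos {p : ℤ × ℤ} (hp : p ∈ F) {i : ℤ} (h : ¬ rowSet F p.1 ⊆ rowSet F i) :
    1 ≤ corank F i :=
  Finset.card_pos.mpr ⟨rowSet F p.1, Finset.mem_filter.mpr ⟨rowSet_mem_classes hp, h⟩⟩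

lemma corankF_lt {p : ℤ × ℤ} (hp : p ∈ F) {i : ℤ} (h : rowSet F i ⊂ rowSet F p.1) :
    corank F p.1 < corank F i := by
  apply Finset.card_lt_card
  rw [Finset.ssubset_iff_of_subset]
  · refine ⟨rowSet F p.1, Finset.mem_filter.mpr ⟨rowSet_mem_classes hp, ?_⟩, ?_⟩
    · intro hc
      exact h.ne (Finset.Subset.antisymm h.subset hc)
    · intro hc
      exact (Finset.mem_filter.mp hc).2 (Finset.Subset.refl _)
  · intro S hS
    rw [Finset.mem_filter] at hS ⊢
    exact ⟨hS.1, fun hc => hS.2 (hc.trans h.subset)⟩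

lemma nested_of_unique (h : uniquelyDetermined F) : Nested F := by
  intro i i'
  by_contra hc
  push_neg at hc
  obtain ⟨h1, h2⟩ := hc
  obtain ⟨j, hj1, hj2⟩ := Finset.not_subset.mp h1
  obtain ⟨j', hj'1, hj'2⟩ := Finset.not_subset.mp h2
  rw [mem_rowSet] at hj1 hj'1
  have hij : (i, j') ∉ F := fun hf => hj'2 (mem_rowSet.mpr hf)
  have hij2 : (i', j) ∉ F := fun hf => hj2 (mem_rowSet.mpr hf)
  have hii : i ≠ i' := by rintro rfl; exact hij2 hj1
  have hjj : j ≠ j' := by rintro rfl; exact hij hj1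
  set F' : Finset (ℤ × ℤ) := insert (i, j') (insert (i', j) ((F.erase (i, j)).erase (i', j'))) with hF'
  have hm1 : (i', j') ∈ F.erase (i, j) :=
    Finset.mem_erase.mpr ⟨by simp [hii.symm, Prod.ext_iff], hj'1⟩
  have hm2 : (i', j) ∉ (F.erase (i, j)).erase (i', j') := by
    intro hc'
    exact hij2 (Finset.mem_of_mem_erase (Finset.mem_of_mem_erase hc'))
  have hm3 : (i, j') ∉ insert (i', j) ((F.erase (i, j)).erase (i', j')) := by
    intro hc'
    rcases Finset.mem_insert.mp hc' with h' | h'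
    · exact hii (congrArg Prod.fst h')
    · exact hij (Finset.mem_of_mem_erase (Finset.mem_of_mem_erase h'))
  have heq : F' = F := by
    apply h
    · intro k
      rw [hF', rowSum_insert hm3, rowSum_insert hm2,
        rowSum_erase hm1, rowSum_erase hj1]
      simp only
      split_ifs <;> omega
    · intro k
      rw [hF', colSum_insert hm3, colSum_insert hm2,
        colSum_erase hm1, colSum_erase hj1]
      simp only
      split_ifs <;> omega
  have : (i, j') ∈ F := by
    rw [← heq, hF']
    exact Finset.mem_insert_self _ _
  exact hij this

end RowSet

section Paths
variable {F1 : Finset (ℤ × ℤ)}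

lemma fwd (F1 : Finset (ℤ × ℤ)) (hN : Nested F1) :
    ∀ n : ℕ, ∀ G : Finset (ℤ × ℤ), ∀ x : ℤ × ℤ, rank F1 x.1 < n → x ∈ F1 → x ∉ G →
    ∃ G' : Finset (ℤ × ℤ), ∃ a : ℕ,
      G' ⊆ G ∪ F1 ∧
      (F1 \ G').card + a = (F1 \ G).card ∧
      1 ≤ a ∧ a ≤ rank F1 x.1 ∧
      rowSum G' x.1 = rowSum G x.1 + 1 ∧
      ((∃ j₀, colSum G' j₀ = colSum G j₀ + 1 ∧ colSum G' j₀ ≤ colSum F1 j₀ ∧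
          (∀ j', j' ≠ j₀ → colSum G' j' = colSum G j') ∧
          (∀ i', i' ≠ x.1 → rowSum G' i' = rowSum G i')) ∨
       (∃ i₀, rowSet F1 i₀ ⊂ rowSet F1 x.1 ∧ rowSum G' i₀ = rowSum G i₀ - 1 ∧
          rowSum F1 i₀ ≤ rowSum G' i₀ ∧
          (∀ i', i' ≠ x.1 → i' ≠ i₀ → rowSum G' i' = rowSum G i') ∧
          (∀ j', colSum G' j' = colSum G j'))) := by
  intro n
  induction n with
  | zero => intro G x h; exact absurd h (Nat.not_lt_zero _)
  | succ n ih =>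
    intro G x hrk hx hxG
    have hxmem : x ∈ F1 \ G := Finset.mem_sdiff.mpr ⟨hx, hxG⟩
    set G1 := insert x G with hG1d
    have h1row : ∀ i', rowSum G1 i' = rowSum G i' + if x.1 = i' then 1 else 0 :=
      fun i' => rowSum_insert hxG i'
    have h1col : ∀ j', colSum G1 j' = colSum G j' + if x.2 = j' then 1 else 0 :=
      fun j' => colSum_insert hxG j'
    have h1row_i : rowSum G1 x.1 = rowSum G x.1 + 1 := by rw [h1row]; simp
    have h1col_j : colSum G1 x.2 = colSum G x.2 + 1 := by rw [h1col]; simp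
    have hF1G1 : F1 \ G1 = (F1 \ G).erase x := by
      ext p
      simp only [hG1d, Finset.mem_sdiff, Finset.mem_erase, Finset.mem_insert]
      tauto
    have hG1sub : G1 ⊆ G ∪ F1 := by
      intro p hp
      rcases Finset.mem_insert.mp hp with h | h
      · exact Finset.mem_union_right _ (h ▸ hx)
      · exact Finset.mem_union_left _ h
    have hcard1 : (F1 \ G1).card + 1 = (F1 \ G).card := by
      rw [hF1G1, Finset.card_erase_of_mem hxmem]
      have : 0 < (F1 \ G).card := Finset.card_pos.mpr ⟨x, hxmem⟩
      omega
    by_cases hstop : colSum G x.2 + 1 ≤ colSum F1 x.2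
    · refine ⟨G1, 1, hG1sub, hcard1, le_refl _, rankF_pos hx, h1row_i, Or.inl ⟨x.2,
        h1col_j, by omega, fun j' hj' => ?_, fun i' hi' => ?_⟩⟩
      · rw [h1col]; simp [Ne.symm hj']
      · rw [h1row]; simp [Ne.symm hi']
    · push_neg at hstop
      have hlt : colSum F1 x.2 < colSum G1 x.2 := by omega
      obtain ⟨y, hyG1, hyF1, hyj⟩ := exists_col_mem hlt
      have hyx : y ≠ x := fun h => hyF1 (h ▸ hx)
      have hyG : y ∈ G := by
        rcases Finset.mem_insert.mp hyG1 with h | h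
        · exact absurd h hyx
        · exact h
      have hyi : y.1 ≠ x.1 := by
        intro h
        exact hyx (Prod.ext h hyj)
      have hjR : x.2 ∈ rowSet F1 x.1 := mem_rowSet.mpr hx
      have hjR2 : x.2 ∉ rowSet F1 y.1 := by
        intro hc
        have : (y.1, x.2) ∈ F1 := mem_rowSet.mp hc
        rw [← hyj] at this
        exact hyF1 this
      have hclass : rowSet F1 y.1 ⊂ rowSet F1 x.1 := by
        rcases hN y.1 x.1 with h | h
        · exact ⟨h, fun hc => hjR2 (hc hjR)⟩
        · exact absurd (h hjR) hjR2
      set G2 := G1.erase y with hG2d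
      have h2rowE : ∀ i', rowSum G2 i' = rowSum G1 i' - if y.1 = i' then 1 else 0 :=
        fun i' => rowSum_erase hyG1 i'
      have h2colE : ∀ j', colSum G2 j' = colSum G1 j' - if y.2 = j' then 1 else 0 :=
        fun j' => colSum_erase hyG1 j'
      have h2col : ∀ j', colSum G2 j' = colSum G j' := by
        intro j'
        rw [h2colE, h1col, hyj]
        split_ifs <;> omega
      have h2row_i : rowSum G2 x.1 = rowSum G x.1 + 1 := by
        rw [h2rowE, h1row]
        simp [hyi]
      have h2row_y : rowSum G2 y.1 = rowSum G y.1 - 1 := by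
        rw [h2rowE, h1row]
        simp [Ne.symm hyi]
      have h2row_ne : ∀ i', i' ≠ x.1 → i' ≠ y.1 → rowSum G2 i' = rowSum G i' := by
        intro i' h1 h2
        rw [h2rowE, h1row]
        simp [Ne.symm h1, Ne.symm h2]
      have hF1G2 : F1 \ G2 = (F1 \ G).erase x := by
        rw [← hF1G1]
        ext p
        simp only [hG2d, Finset.mem_sdiff, Finset.mem_erase]
        constructor
        · rintro ⟨h1, h2⟩
          exact ⟨h1, fun hc => h2 ⟨fun he => hyF1 (he ▸ h1), hc⟩⟩
        · rintro ⟨h1, h2⟩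
          exact ⟨h1, fun hc => h2 hc.2⟩
      have hcard2 : (F1 \ G2).card + 1 = (F1 \ G).card := by
        rw [hF1G2, Finset.card_erase_of_mem hxmem]
        have : 0 < (F1 \ G).card := Finset.card_pos.mpr ⟨x, hxmem⟩
        omega
      have hG2sub : G2 ⊆ G ∪ F1 := (Finset.erase_subset _ _).trans hG1sub
      by_cases hstop2 : rowSum F1 y.1 ≤ rowSum G y.1 - 1
      · refine ⟨G2, 1, hG2sub, hcard2, le_refl _, rankF_pos hx, h2row_i, Or.inr ⟨y.1,
          hclass, h2row_y, by omega, fun i' h1 h2 => h2row_ne i' h1 h2, h2col⟩⟩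
      · push_neg at hstop2
        have hlt2 : rowSum G2 y.1 < rowSum F1 y.1 := by omega
        obtain ⟨x₂, hx₂F1, hx₂G2, hx₂i⟩ := exists_row_mem hlt2
        have hrk2 : rank F1 x₂.1 < n := by
          have h1 : rank F1 y.1 < rank F1 x.1 := rankF_lt hx hclass
          rw [hx₂i]
          omega
        obtain ⟨G3, a3, hsub3, hcard3, ha3, ha3', hrow3, hend3⟩ := ih G2 x₂ hrk2 hx₂F1 hx₂G2
        have hx₂ne : x₂.1 ≠ x.1 := by rw [hx₂i]; exact hyi
        have hrow3y : rowSum G3 y.1 = rowSum G2 y.1 + 1 := by rw [← hx₂i]; exact hrow3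
        refine ⟨G3, a3 + 1, hsub3.trans (Finset.union_subset
            (hG2sub) (Finset.subset_union_right)), by omega, by omega, ?_, ?_, ?_⟩
        · have := rankF_lt hx hclass
          rw [hx₂i] at ha3'
          omega
        · -- rowSum G3 x.1 = rowSum G x.1 + 1
          rcases hend3 with ⟨j₀, e1, e2, e3, e4⟩ | ⟨i₀, ecl, e1, e2, e3, e4⟩
          · rw [e4 x.1 (Ne.symm hx₂ne), h2row_i]
          · have hi₀ : x.1 ≠ i₀ := by
              intro h
              rw [hx₂i] at ecl
              have hss : rowSet F1 i₀ ⊂ rowSet F1 x.1 := by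
                rw [Finset.ssubset_def]
                exact ⟨ecl.subset.trans hclass.subset,
                  fun hc => ecl.not_subset (hclass.subset.trans hc)⟩
              rw [← h] at hss
              exact hss.ne rfl
            rw [e3 x.1 (Ne.symm hx₂ne) hi₀, h2row_i]
        · rcases hend3 with ⟨j₀, e1, e2, e3, e4⟩ | ⟨i₀, ecl, e1, e2, e3, e4⟩
          · left
            refine ⟨j₀, by rw [e1, h2col], e2, fun j' hj' => ?_, fun i' hi' => ?_⟩
            · rw [e3 j' hj', h2col]
            · by_cases hy : i' = y.1
              · rw [hy, hrow3y, h2row_y]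
                ring
              · rw [e4 i' (by rw [hx₂i]; exact hy), h2row_ne i' hi' hy]
          · right
            rw [hx₂i] at ecl
            have hi₀y : i₀ ≠ y.1 := fun h => ecl.ne (h ▸ rfl)
            have hi₀x : i₀ ≠ x.1 := by
              intro h
              exact ecl.not_subset (hclass.subset.trans (h ▸ Finset.Subset.refl _))
            have ecl' : rowSet F1 i₀ ⊂ rowSet F1 x.1 := by
              rw [Finset.ssubset_def]
              exact ⟨ecl.subset.trans hclass.subset,
                fun hc => ecl.not_subset (hclass.subset.trans hc)⟩
            refine ⟨i₀, ecl', ?_, e2, fun i' h1 h2 => ?_, fun j' => by rw [e4 j', h2col]⟩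
            · rw [e1, h2row_ne i₀ hi₀x hi₀y]
            · by_cases hy : i' = y.1
              · rw [hy, hrow3y, h2row_y]
                ring
              · rw [e3 i' (by rw [hx₂i]; exact hy) h2, h2row_ne i' h1 hy]

end Paths

lemma bwd (F1 : Finset (ℤ × ℤ)) (hN : Nested F1) :
    ∀ n : ℕ, ∀ G : Finset (ℤ × ℤ), ∀ y : ℤ × ℤ, corank F1 y.1 < n → y ∉ F1 → y ∈ G →
    ∃ G' : Finset (ℤ × ℤ), ∃ b : ℕ,
      G' ⊆ G ∪ F1 ∧
      (F1 \ G').card + b = (F1 \ G).card ∧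
      b ≤ corank F1 y.1 ∧
      rowSum G' y.1 = rowSum G y.1 - 1 ∧
      ((∃ j₀, colSum G' j₀ = colSum G j₀ - 1 ∧ colSum F1 j₀ ≤ colSum G' j₀ ∧
          (∀ j', j' ≠ j₀ → colSum G' j' = colSum G j') ∧
          (∀ i', i' ≠ y.1 → rowSum G' i' = rowSum G i')) ∨
       (∃ i₀, rowSet F1 y.1 ⊂ rowSet F1 i₀ ∧ rowSum G' i₀ = rowSum G i₀ + 1 ∧
          rowSum G' i₀ ≤ rowSum F1 i₀ ∧
          (∀ i', i' ≠ y.1 → i' ≠ i₀ → rowSum G' i' = rowSum G i') ∧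
          (∀ j', colSum G' j' = colSum G j'))) := by
  intro n
  induction n with
  | zero => intro G y h; exact absurd h (Nat.not_lt_zero _)
  | succ n ih =>
    intro G y hrk hyF1 hyG
    set G1 := G.erase y with hG1d
    have h1row : ∀ i', rowSum G1 i' = rowSum G i' - if y.1 = i' then 1 else 0 :=
      fun i' => rowSum_erase hyG i'
    have h1col : ∀ j', colSum G1 j' = colSum G j' - if y.2 = j' then 1 else 0 :=
      fun j' => colSum_erase hyG j'
    have h1row_y : rowSum G1 y.1 = rowSum G y.1 - 1 := by rw [h1row]; simp
    have h1col_j : colSum G1 y.2 = colSum G y.2 - 1 := by rw [h1col]; simp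
    have hF1G1 : F1 \ G1 = F1 \ G := by
      ext p
      simp only [hG1d, Finset.mem_sdiff, Finset.mem_erase]
      constructor
      · rintro ⟨h1, h2⟩
        exact ⟨h1, fun hc => h2 ⟨fun he => hyF1 (he ▸ h1), hc⟩⟩
      · rintro ⟨h1, h2⟩
        exact ⟨h1, fun hc => h2 hc.2⟩
    have hG1sub : G1 ⊆ G ∪ F1 := (Finset.erase_subset _ _).trans Finset.subset_union_left
    by_cases hstop : colSum F1 y.2 ≤ colSum G y.2 - 1
    · refine ⟨G1, 0, hG1sub, by rw [hF1G1]; ring, Nat.zero_le _, h1row_y, Or.inl ⟨y.2,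
        h1col_j, by omega, fun j' hj' => ?_, fun i' hi' => ?_⟩⟩
      · rw [h1col]; simp [Ne.symm hj']
      · rw [h1row]; simp [Ne.symm hi']
    · push_neg at hstop
      have hlt : colSum G1 y.2 < colSum F1 y.2 := by omega
      obtain ⟨x', hx'F1, hx'G1, hx'j⟩ := exists_col_mem hlt
      have hx'y : x' ≠ y := fun h => hyF1 (h ▸ hx'F1)
      have hx'G : x' ∉ G := fun h => hx'G1 (Finset.mem_erase.mpr ⟨hx'y, h⟩)
      have hx'i : x'.1 ≠ y.1 := by
        intro h
        exact hx'y (Prod.ext h hx'j)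
      have hjR : x'.2 ∈ rowSet F1 x'.1 := mem_rowSet.mpr hx'F1
      have hjR2 : x'.2 ∉ rowSet F1 y.1 := by
        intro hc
        have : (y.1, x'.2) ∈ F1 := mem_rowSet.mp hc
        rw [hx'j] at this
        exact hyF1 this
      have hclass : rowSet F1 y.1 ⊂ rowSet F1 x'.1 := by
        rcases hN y.1 x'.1 with h | h
        · rw [Finset.ssubset_def]
          exact ⟨h, fun hc => hjR2 (hc hjR)⟩
        · exact absurd (h hjR) hjR2
      set G2 := insert x' G1 with hG2d
      have h2rowE : ∀ i', rowSum G2 i' = rowSum G1 i' + if x'.1 = i' then 1 else 0 :=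
        fun i' => rowSum_insert hx'G1 i'
      have h2colE : ∀ j', colSum G2 j' = colSum G1 j' + if x'.2 = j' then 1 else 0 :=
        fun j' => colSum_insert hx'G1 j'
      have h2col : ∀ j', colSum G2 j' = colSum G j' := by
        intro j'
        rw [h2colE, h1col, hx'j]
        split_ifs <;> omega
      have h2row_x : rowSum G2 x'.1 = rowSum G x'.1 + 1 := by
        rw [h2rowE, h1row]
        simp [Ne.symm hx'i]
      have h2row_y : rowSum G2 y.1 = rowSum G y.1 - 1 := by
        rw [h2rowE, h1row]
        simp [hx'i]
      have h2row_ne : ∀ i', i' ≠ y.1 → i' ≠ x'.1 → rowSum G2 i' = rowSum G i' := by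
        intro i' h1 h2
        rw [h2rowE, h1row]
        simp [Ne.symm h1, Ne.symm h2]
      have hx'mem : x' ∈ F1 \ G := Finset.mem_sdiff.mpr ⟨hx'F1, hx'G⟩
      have hF1G2 : F1 \ G2 = (F1 \ G).erase x' := by
        ext p
        simp only [hG2d, hG1d, Finset.mem_sdiff, Finset.mem_erase, Finset.mem_insert,
          not_or]
        constructor
        · rintro ⟨h1, h2, h3⟩
          exact ⟨h2, h1, fun hc => h3 (And.intro (fun he => hyF1 (he ▸ h1)) hc)⟩
        · rintro ⟨h1, h2, h3⟩
          exact ⟨h2, h1, fun hc => h3 hc.2⟩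
      have hcard2 : (F1 \ G2).card + 1 = (F1 \ G).card := by
        rw [hF1G2, Finset.card_erase_of_mem hx'mem]
        have : 0 < (F1 \ G).card := Finset.card_pos.mpr ⟨x', hx'mem⟩
        omega
      have hG2sub : G2 ⊆ G ∪ F1 := by
        intro p hp
        rcases Finset.mem_insert.mp hp with h | h
        · exact Finset.mem_union_right _ (h ▸ hx'F1)
        · exact hG1sub h
      by_cases hstop2 : rowSum G x'.1 + 1 ≤ rowSum F1 x'.1
      · refine ⟨G2, 1, hG2sub, hcard2, corankF_pos hx'F1 hclass.not_subset, h2row_y,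
          Or.inr ⟨x'.1, hclass, h2row_x, by omega,
            fun i' h1 h2 => h2row_ne i' h1 h2, h2col⟩⟩
      · push_neg at hstop2
        have hlt2 : rowSum F1 x'.1 < rowSum G2 x'.1 := by omega
        obtain ⟨y₂, hy₂G2, hy₂F1, hy₂i⟩ := exists_row_mem hlt2
        have hcrk : corank F1 x'.1 < corank F1 y.1 := corankF_lt hx'F1 hclass
        have hrk2 : corank F1 y₂.1 < n := by rw [hy₂i]; omega
        obtain ⟨G3, b3, hsub3, hcard3, hb3, hrow3, hend3⟩ := ih G2 y₂ hrk2 hy₂F1 hy₂G2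
        have hy₂ne : y₂.1 ≠ y.1 := by rw [hy₂i]; exact hx'i
        have hrow3x : rowSum G3 x'.1 = rowSum G2 x'.1 - 1 := by rw [← hy₂i]; exact hrow3
        rw [hy₂i] at hb3
        refine ⟨G3, b3 + 1, hsub3.trans (Finset.union_subset hG2sub
            Finset.subset_union_right), by rw [← hcard2, ← hcard3]; omega,
            by omega, ?_, ?_⟩
        · -- rowSum G3 y.1 = rowSum G y.1 - 1
          rcases hend3 with ⟨j₀, e1, e2, e3, e4⟩ | ⟨i₀, ecl, e1, e2, e3, e4⟩
          · rw [e4 y.1 (Ne.symm hy₂ne), h2row_y]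
          · have hi₀ : y.1 ≠ i₀ := by
              intro h
              rw [hy₂i] at ecl
              have hss : rowSet F1 y.1 ⊂ rowSet F1 i₀ := by
                rw [Finset.ssubset_def]
                exact ⟨hclass.subset.trans ecl.subset,
                  fun hc => ecl.not_subset (hc.trans hclass.subset)⟩
              rw [← h] at hss
              exact hss.ne rfl
            rw [e3 y.1 (Ne.symm hy₂ne) hi₀, h2row_y]
        · rcases hend3 with ⟨j₀, e1, e2, e3, e4⟩ | ⟨i₀, ecl, e1, e2, e3, e4⟩
          · left
            refine ⟨j₀, by rw [e1, h2col], e2, fun j' hj' => ?_, fun i' hi' => ?_⟩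
            · rw [e3 j' hj', h2col]
            · by_cases hxx : i' = x'.1
              · rw [hxx, hrow3x, h2row_x]
                ring
              · rw [e4 i' (by rw [hy₂i]; exact hxx), h2row_ne i' hi' hxx]
          · right
            rw [hy₂i] at ecl
            have hi₀x : i₀ ≠ x'.1 := fun h => ecl.ne (congrArg (rowSet F1) h).symm
            have ecl' : rowSet F1 y.1 ⊂ rowSet F1 i₀ := by
              rw [Finset.ssubset_def]
              exact ⟨hclass.subset.trans ecl.subset,
                fun hc => ecl.not_subset (hc.trans hclass.subset)⟩
            have hi₀y : i₀ ≠ y.1 := fun h => ecl'.ne (congrArg (rowSet F1) h).symm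
            refine ⟨i₀, ecl', ?_, e2, fun i' h1 h2 => ?_, fun j' => by rw [e4 j', h2col]⟩
            · rw [e1, h2row_ne i₀ hi₀y hi₀x]
            · by_cases hxx : i' = x'.1
              · rw [hxx, hrow3x, h2row_x]
                ring
              · rw [e3 i' (by rw [hy₂i]; exact hxx) h2, h2row_ne i' h1 hxx]

section Step

lemma sum_update {s : Finset ℤ} {a : ℤ} (ha : a ∈ s) (f g : ℤ → ℤ)
    (h : ∀ x ∈ s, x ≠ a → g x = f x) :
    ∑ x ∈ s, g x = (∑ x ∈ s, f x) + (g a - f a) := by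
  rw [← Finset.add_sum_erase _ g ha, ← Finset.add_sum_erase _ f ha,
    Finset.sum_congr rfl
      (fun x hx => h x (Finset.mem_of_mem_erase hx) (Finset.ne_of_mem_erase hx))]
  ring

lemma sum_drop₁ {s : Finset ℤ} {a : ℤ} (ha : a ∈ s) (f g : ℤ → ℤ)
    (h : ∀ x ∈ s, x ≠ a → g x = f x) (hd : g a = f a - 1) :
    ∑ x ∈ s, g x = (∑ x ∈ s, f x) - 1 := by
  rw [sum_update ha f g h, hd]; ring

lemma sum_drop₂ {s : Finset ℤ} {a b : ℤ} (ha : a ∈ s) (hb : b ∈ s) (hab : a ≠ b)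
    (f g : ℤ → ℤ) (h : ∀ x ∈ s, x ≠ a → x ≠ b → g x = f x)
    (hda : g a = f a - 1) (hdb : g b = f b - 1) :
    ∑ x ∈ s, g x = (∑ x ∈ s, f x) - 2 := by
  have hb' : b ∈ s.erase a := Finset.mem_erase.mpr ⟨Ne.symm hab, hb⟩
  rw [← Finset.add_sum_erase _ g ha, ← Finset.add_sum_erase _ f ha,
    sum_drop₁ hb' f g (fun x hx hxb => h x (Finset.mem_of_mem_erase hx)
      (Finset.ne_of_mem_erase hx) hxb) hdb, hda]
  ring

lemma abs_drop₁ {u v : ℤ} (h : v + 1 ≤ u) : |u - (v + 1)| = |u - v| - 1 := by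
  rw [abs_of_nonneg (by omega), abs_of_nonneg (by omega)]; ring

lemma abs_drop₂ {u v : ℤ} (h : u ≤ v - 1) : |u - (v - 1)| = |u - v| - 1 := by
  rw [abs_of_nonpos (by omega), abs_of_nonpos (by omega)]; ring

lemma step (F1 F2 : Finset (ℤ × ℤ)) (hN : Nested F1) (hne : (F1 \ F2).Nonempty) :
    ∃ F2' : Finset (ℤ × ℤ), ∃ c : ℕ,
      (F1 \ F2').card + c = (F1 \ F2).card ∧
      1 ≤ c ∧ c ≤ Q F1 ∧
      lineDiff F1 F2' + 2 ≤ lineDiff F1 F2 := by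
  obtain ⟨x, hx⟩ := hne
  rw [Finset.mem_sdiff] at hx
  obtain ⟨hxF1, hxF2⟩ := hx
  obtain ⟨G', a, hsub, hcard, ha1, ha2, hrow, hend⟩ :=
    fwd F1 hN (rank F1 x.1 + 1) F2 x (Nat.lt_succ_self _) hxF1 hxF2
  set S := (F1 ∪ F2).image Prod.snd with hSd
  set T := (F1 ∪ F2).image Prod.fst with hTd
  have hG'sub : G' ⊆ F1 ∪ F2 :=
    hsub.trans (Finset.union_subset Finset.subset_union_right Finset.subset_union_left)
  have hLD : lineDiff F1 F2 = (∑ j ∈ S, |colSum F1 j - colSum F2 j|)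
      + ∑ i ∈ T, |rowSum F1 i - rowSum F2 i| :=
    lineDiff_eq F1 F2 (Finset.Subset.refl _) (Finset.Subset.refl _)
  have hunion : F1 ∪ G' ⊆ F1 ∪ F2 :=
    Finset.union_subset Finset.subset_union_left hG'sub
  have hLD' : lineDiff F1 G' = (∑ j ∈ S, |colSum F1 j - colSum G' j|)
      + ∑ i ∈ T, |rowSum F1 i - rowSum G' i| :=
    lineDiff_eq F1 G' (Finset.image_subset_image hunion) (Finset.image_subset_image hunion)
  have hSmem1 : ∀ j, 0 < colSum F1 j → j ∈ S := fun j h =>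
    Finset.image_subset_image Finset.subset_union_left (mem_image_snd_of_colSum_pos h)
  have hSmem2 : ∀ j, 0 < colSum F2 j → j ∈ S := fun j h =>
    Finset.image_subset_image Finset.subset_union_right (mem_image_snd_of_colSum_pos h)
  have hTmem1 : ∀ i, 0 < rowSum F1 i → i ∈ T := fun i h =>
    Finset.image_subset_image Finset.subset_union_left (mem_image_fst_of_rowSum_pos h)
  have hTmem2 : ∀ i, 0 < rowSum F2 i → i ∈ T := fun i h =>
    Finset.image_subset_image Finset.subset_union_right (mem_image_fst_of_rowSum_pos h)
  have hx1T : x.1 ∈ T := Finset.mem_image_of_mem _ (Finset.mem_union_left _ hxF1)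
  by_cases hρ : rowSum F2 x.1 + 1 ≤ rowSum F1 x.1
  · -- row x.1 improves; single fwd path suffices
    refine ⟨G', a, hcard, ha1, ha2.trans (rank_le_Q F1 x.1), ?_⟩
    rcases hend with ⟨j₀, e1, e2, e3, e4⟩ | ⟨i₀, ecl, e1, e2, e3, e4⟩
    · have hj₀S : j₀ ∈ S := hSmem1 j₀ (by have := colSum_nonneg F2 j₀; omega)
      have hT' : ∑ i ∈ T, |rowSum F1 i - rowSum G' i|
          = (∑ i ∈ T, |rowSum F1 i - rowSum F2 i|) - 1 := by
        refine sum_drop₁ hx1T _ _ (fun i hi hix => by rw [e4 i hix]) ?_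
        rw [hrow]
        exact abs_drop₁ hρ
      have hS' : ∑ j ∈ S, |colSum F1 j - colSum G' j|
          = (∑ j ∈ S, |colSum F1 j - colSum F2 j|) - 1 := by
        refine sum_drop₁ hj₀S _ _ (fun j hj hjne => by rw [e3 j hjne]) ?_
        rw [e1]
        exact abs_drop₁ (by omega)
      rw [hLD, hLD', hS', hT']
      omega
    · have hi₀T : i₀ ∈ T := hTmem2 i₀ (by have := rowSum_nonneg F1 i₀; omega)
      have hi₀x : i₀ ≠ x.1 := fun h => ecl.ne (congrArg (rowSet F1) h)
      have hT' : ∑ i ∈ T, |rowSum F1 i - rowSum G' i|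
          = (∑ i ∈ T, |rowSum F1 i - rowSum F2 i|) - 2 := by
        refine sum_drop₂ hx1T hi₀T (Ne.symm hi₀x) _ _
          (fun i hi hix hii₀ => by rw [e3 i hix hii₀]) ?_ ?_
        · rw [hrow]; exact abs_drop₁ hρ
        · rw [e1]; exact abs_drop₂ (by omega)
      have hS' : ∑ j ∈ S, |colSum F1 j - colSum G' j|
          = ∑ j ∈ S, |colSum F1 j - colSum F2 j| :=
        Finset.sum_congr rfl (fun j _ => by rw [e4 j])
      rw [hLD, hLD', hS', hT']
      omega
  · -- need backward path
    push_neg at hρ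
    have hlt : rowSum F1 x.1 < rowSum G' x.1 := by omega
    obtain ⟨y₀, hy₀G', hy₀F1, hy₀i⟩ := exists_row_mem hlt
    obtain ⟨G'', b, hsub2, hcard2, hb, hrow2, hend2⟩ :=
      bwd F1 hN (corank F1 y₀.1 + 1) G' y₀ (Nat.lt_succ_self _) hy₀F1 hy₀G'
    rw [hy₀i] at hrow2 hb hend2
    have netx : rowSum G'' x.1 = rowSum F2 x.1 := by rw [hrow2, hrow]; ring
    have hG''sub : G'' ⊆ F1 ∪ F2 :=
      hsub2.trans (Finset.union_subset hG'sub Finset.subset_union_left)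
    have hunion2 : F1 ∪ G'' ⊆ F1 ∪ F2 :=
      Finset.union_subset Finset.subset_union_left hG''sub
    have hLD'' : lineDiff F1 G'' = (∑ j ∈ S, |colSum F1 j - colSum G'' j|)
        + ∑ i ∈ T, |rowSum F1 i - rowSum G'' i| :=
      lineDiff_eq F1 G'' (Finset.image_subset_image hunion2) (Finset.image_subset_image hunion2)
    refine ⟨G'', a + b, by omega, by omega, ?_, ?_⟩
    · have := rank_add_corank F1 x.1
      omega
    · rcases hend with ⟨j₀, a1, a2, a3, a4⟩ | ⟨i₀, acl, a1, a2, a3, a4⟩ <;>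
        rcases hend2 with ⟨j₁, b1, b2, b3, b4⟩ | ⟨i₁, bcl, b1, b2, b3, b4⟩
      · -- col, col
        have hjj : j₀ ≠ j₁ := by
          intro h
          rw [← h] at b1 b2
          rw [b3 j₀ (fun hc => by omega)] at b1
          omega
        have hj₀S : j₀ ∈ S := hSmem1 j₀ (by have := colSum_nonneg F2 j₀; omega)
        have hj₁S : j₁ ∈ S := hSmem2 j₁ (by
          have h1 := a3 j₁ (Ne.symm hjj)
          have := colSum_nonneg F1 j₁
          omega)
        have hT' : ∑ i ∈ T, |rowSum F1 i - rowSum G'' i|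
            = ∑ i ∈ T, |rowSum F1 i - rowSum F2 i| := by
          refine Finset.sum_congr rfl (fun i _ => ?_)
          by_cases hix : i = x.1
          · rw [hix, netx]
          · rw [b4 i hix, a4 i hix]
        have hS' : ∑ j ∈ S, |colSum F1 j - colSum G'' j|
            = (∑ j ∈ S, |colSum F1 j - colSum F2 j|) - 2 := by
          refine sum_drop₂ hj₀S hj₁S hjj _ _
            (fun j hj hj0 hj1 => by rw [b3 j hj1, a3 j hj0]) ?_ ?_
          · rw [b3 j₀ hjj, a1]
            exact abs_drop₁ (by omega)
          · rw [b1, a3 j₁ (Ne.symm hjj)]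
            have hle : colSum F1 j₁ ≤ colSum F2 j₁ - 1 := by
              have := a3 j₁ (Ne.symm hjj)
              omega
            exact abs_drop₂ hle
        rw [hLD, hLD'', hS', hT']
        omega
      · -- col, row
        have hi₁x : i₁ ≠ x.1 := fun h => bcl.ne (congrArg (rowSet F1) h).symm
        have hi₁T : i₁ ∈ T := hTmem1 i₁ (by
          have h1 := a4 i₁ hi₁x
          have := rowSum_nonneg F2 i₁
          omega)
        have hj₀S : j₀ ∈ S := hSmem1 j₀ (by have := colSum_nonneg F2 j₀; omega)
        have hS' : ∑ j ∈ S, |colSum F1 j - colSum G'' j|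
            = (∑ j ∈ S, |colSum F1 j - colSum F2 j|) - 1 := by
          refine sum_drop₁ hj₀S _ _ (fun j hj hjne => by rw [b4 j, a3 j hjne]) ?_
          rw [b4 j₀, a1]
          exact abs_drop₁ (by omega)
        have hT' : ∑ i ∈ T, |rowSum F1 i - rowSum G'' i|
            = (∑ i ∈ T, |rowSum F1 i - rowSum F2 i|) - 1 := by
          refine sum_drop₁ hi₁T _ _ (fun i hi hine => ?_) ?_
          · by_cases hix : i = x.1
            · rw [hix, netx]
            · rw [b3 i hix hine, a4 i hix]
          · rw [b1, a4 i₁ hi₁x]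
            exact abs_drop₁ (by
              have := a4 i₁ hi₁x
              omega)
        rw [hLD, hLD'', hS', hT']
        omega
      · -- row, col
        have hi₀x : i₀ ≠ x.1 := fun h => acl.ne (congrArg (rowSet F1) h)
        have hi₀T : i₀ ∈ T := hTmem2 i₀ (by have := rowSum_nonneg F1 i₀; omega)
        have hj₁S : j₁ ∈ S := hSmem2 j₁ (by
          have h1 := a4 j₁
          have := colSum_nonneg F1 j₁
          omega)
        have hS' : ∑ j ∈ S, |colSum F1 j - colSum G'' j|
            = (∑ j ∈ S, |colSum F1 j - colSum F2 j|) - 1 := by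
          refine sum_drop₁ hj₁S _ _ (fun j hj hjne => by rw [b3 j hjne, a4 j]) ?_
          rw [b1, a4 j₁]
          exact abs_drop₂ (by
            have := a4 j₁
            omega)
        have hT' : ∑ i ∈ T, |rowSum F1 i - rowSum G'' i|
            = (∑ i ∈ T, |rowSum F1 i - rowSum F2 i|) - 1 := by
          refine sum_drop₁ hi₀T _ _ (fun i hi hine => ?_) ?_
          · by_cases hix : i = x.1
            · rw [hix, netx]
            · rw [b4 i hix, a3 i hix hine]
          · rw [b4 i₀ hi₀x, a1]
            exact abs_drop₂ (by omega)
        rw [hLD, hLD'', hS', hT']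
        omega
      · -- row, row
        have hi₀x : i₀ ≠ x.1 := fun h => acl.ne (congrArg (rowSet F1) h)
        have hi₁x : i₁ ≠ x.1 := fun h => bcl.ne (congrArg (rowSet F1) h).symm
        have hii : i₀ ≠ i₁ := by
          intro h
          rw [← h] at b1 b2
          rw [b3 i₀ hi₀x (fun hc => by omega)] at b1
          omega
        have hi₀T : i₀ ∈ T := hTmem2 i₀ (by have := rowSum_nonneg F1 i₀; omega)
        have hi₁T : i₁ ∈ T := hTmem1 i₁ (by
          have h1 := a3 i₁ hi₁x (Ne.symm hii)
          have := rowSum_nonneg F2 i₁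
          omega)
        have hS' : ∑ j ∈ S, |colSum F1 j - colSum G'' j|
            = ∑ j ∈ S, |colSum F1 j - colSum F2 j| :=
          Finset.sum_congr rfl (fun j _ => by rw [b4 j, a4 j])
        have hT' : ∑ i ∈ T, |rowSum F1 i - rowSum G'' i|
            = (∑ i ∈ T, |rowSum F1 i - rowSum F2 i|) - 2 := by
          refine sum_drop₂ hi₀T hi₁T hii _ _ (fun i hi h0 h1 => ?_) ?_ ?_
          · by_cases hix : i = x.1
            · rw [hix, netx]
            · rw [b3 i hix h1, a3 i hix h0]
          · rw [b3 i₀ hi₀x hii, a1]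
            exact abs_drop₂ (by omega)
          · rw [b1, a3 i₁ hi₁x (Ne.symm hii)]
            exact abs_drop₁ (by
              have := a3 i₁ hi₁x (Ne.symm hii)
              omega)
        rw [hLD, hLD'', hS', hT']
        omega

end Step

section Main

lemma main_bound (F1 : Finset (ℤ × ℤ)) (hN : Nested F1) :
    ∀ m : ℕ, ∀ F2 : Finset (ℤ × ℤ), (F1 \ F2).card ≤ m →
    2 * ((F1 \ F2).card : ℤ) ≤ lineDiff F1 F2 * (Q F1 : ℤ) := by
  intro m
  induction m with
  | zero =>
    intro F2 h
    have h0 : (F1 \ F2).card = 0 := Nat.le_zero.mp h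
    rw [h0]
    have := lineDiff_nonneg F1 F2
    positivity
  | succ m ih =>
    intro F2 h
    by_cases h0 : (F1 \ F2).card = 0
    · rw [h0]
      have := lineDiff_nonneg F1 F2
      positivity
    · obtain ⟨F2', c, hcard, hc1, hc2, hL⟩ :=
        step F1 F2 hN (Finset.card_pos.mp (Nat.pos_of_ne_zero h0))
      have hih := ih F2' (by omega)
      have hQ0 : (0:ℤ) ≤ (Q F1 : ℤ) := Int.natCast_nonneg _
      have hL'0 : (0:ℤ) ≤ lineDiff F1 F2' := lineDiff_nonneg _ _
      have hmul : lineDiff F1 F2' * (Q F1 : ℤ) ≤ (lineDiff F1 F2 - 2) * (Q F1 : ℤ) :=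
        mul_le_mul_of_nonneg_right (by omega) hQ0
      have hc2' : (c : ℤ) ≤ (Q F1 : ℤ) := Int.ofNat_le.mpr hc2
      have hcards : ((F1 \ F2').card : ℤ) + (c : ℤ) = ((F1 \ F2).card : ℤ) := by
        exact_mod_cast congrArg (Nat.cast : ℕ → ℤ) hcard
      nlinarith [hih, hmul, hc2', hcards]

lemma sum_image_le_nat {α β : Type*} [DecidableEq α] [DecidableEq β]
    (s : Finset α) (f : α → β) (g : β → ℕ) :
    ∑ b ∈ s.image f, g b ≤ ∑ a ∈ s, g (f a) := by
  induction s using Finset.induction with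
  | empty => simp
  | @insert a s ha ih =>
    rw [Finset.image_insert, Finset.sum_insert ha]
    by_cases hf : f a ∈ s.image f
    · rw [Finset.insert_eq_self.mpr hf]
      omega
    · rw [Finset.sum_insert hf]
      omega

lemma sum_distinct_pos : ∀ n : ℕ, ∀ t : Finset ℕ, t.card = n → 0 ∉ t →
    t.card * (t.card + 1) ≤ 2 * ∑ x ∈ t, x := by
  intro n
  induction n with
  | zero =>
    intro t h _
    rw [Finset.card_eq_zero.mp h]
    simp
  | succ n ih =>
    intro t hcard h0
    have hne : t.Nonempty := Finset.card_pos.mp (by omega)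
    set M := t.max' hne with hM
    have hMt : M ∈ t := t.max'_mem hne
    have hsub : t ⊆ Finset.Icc 1 M := fun x hx => Finset.mem_Icc.mpr
      ⟨Nat.one_le_iff_ne_zero.mpr (fun hz => h0 (hz ▸ hx)), t.le_max' x hx⟩
    have hcM : t.card ≤ M := by
      have := Finset.card_le_card hsub
      simpa [Nat.card_Icc] using this
    have h1 : (t.erase M).card = n := by rw [Finset.card_erase_of_mem hMt, hcard]; omega
    have h2 := ih (t.erase M) h1 (fun hc => h0 (Finset.mem_of_mem_erase hc))
    have h3 : ∑ x ∈ t, x = M + ∑ x ∈ t.erase M, x := (Finset.add_sum_erase _ _ hMt).symm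
    rw [h1] at h2
    rw [hcard] at hcM ⊢
    rw [h3]
    nlinarith

lemma Q_bound (F1 : Finset (ℤ × ℤ)) (hN : Nested F1) :
    Q F1 * (Q F1 + 1) ≤ 2 * F1.card := by
  classical
  have hcard : F1.card = ∑ i ∈ F1.image Prod.fst, (F1.filter fun p => p.1 = i).card :=
    Finset.card_eq_sum_card_fiberwise (fun p hp => Finset.mem_image_of_mem _ hp)
  have hfib : ∀ i, (F1.filter fun p => p.1 = i).card = (rowSet F1 i).card := by
    intro i
    rw [rowSet, Finset.card_image_of_injOn]
    intro p hp q hq hpq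
    rw [Finset.mem_coe, Finset.mem_filter] at hp hq
    exact Prod.ext (hp.2.trans hq.2.symm) hpq
  have hclsum : ∑ S ∈ classes F1, S.card ≤ F1.card := by
    rw [hcard]
    calc ∑ S ∈ classes F1, S.card ≤ ∑ i ∈ F1.image Prod.fst, (rowSet F1 i).card :=
          sum_image_le_nat _ _ _
      _ = ∑ i ∈ F1.image Prod.fst, (F1.filter fun p => p.1 = i).card :=
          Finset.sum_congr rfl (fun i _ => (hfib i).symm)
  have hinj : ∀ S ∈ classes F1, ∀ S' ∈ classes F1, S.card = S'.card → S = S' := by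
    intro S hS S' hS' hcardeq
    simp only [classes, Finset.mem_image] at hS hS'
    obtain ⟨i, -, rfl⟩ := hS
    obtain ⟨i', -, rfl⟩ := hS'
    rcases hN i i' with h | h
    · exact Finset.eq_of_subset_of_card_le h (le_of_eq hcardeq.symm)
    · exact (Finset.eq_of_subset_of_card_le h (le_of_eq hcardeq)).symm
  have hzero : 0 ∉ (classes F1).image Finset.card := by
    intro hc
    rw [Finset.mem_image] at hc
    obtain ⟨S, hS, hS0⟩ := hc
    simp only [classes, Finset.mem_image] at hS
    obtain ⟨i, hi, rfl⟩ := hS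
    obtain ⟨p, hp, rfl⟩ := hi
    have hmem : p.2 ∈ rowSet F1 p.1 := mem_rowSet.mpr hp
    rw [Finset.card_eq_zero.mp hS0] at hmem
    exact absurd hmem (Finset.notMem_empty _)
  have hqcard : ((classes F1).image Finset.card).card = Q F1 :=
    Finset.card_image_of_injOn (fun S hS S' hS' h =>
      hinj S (Finset.mem_coe.mp hS) S' (Finset.mem_coe.mp hS') h)
  have hsumeq : ∑ k ∈ (classes F1).image Finset.card, k = ∑ S ∈ classes F1, S.card :=
    Finset.sum_image hinj
  have hmain := sum_distinct_pos ((classes F1).image Finset.card).card _ rfl hzero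
  rw [hqcard, hsumeq] at hmain
  exact hmain.trans (Nat.mul_le_mul_left 2 hclsum)

lemma card_eq_of_rowSum_eq {F2 F3 : Finset (ℤ × ℤ)} (h : ∀ i, rowSum F2 i = rowSum F3 i) :
    F2.card = F3.card := by
  have h2 : F2.card = ∑ i ∈ (F2 ∪ F3).image Prod.fst, (F2.filter fun p => p.1 = i).card :=
    Finset.card_eq_sum_card_fiberwise
      (fun p hp => Finset.mem_image_of_mem _ (Finset.mem_union_left _ hp))
  have h3 : F3.card = ∑ i ∈ (F2 ∪ F3).image Prod.fst, (F3.filter fun p => p.1 = i).card :=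
    Finset.card_eq_sum_card_fiberwise
      (fun p hp => Finset.mem_image_of_mem _ (Finset.mem_union_right _ hp))
  rw [h2, h3]
  refine Finset.sum_congr rfl (fun i _ => ?_)
  have hi := h i
  unfold rowSum at hi
  exact_mod_cast hi

lemma sdiff_card_eq {A B : Finset (ℤ × ℤ)} (h : A.card = B.card) :
    (A \ B).card = (B \ A).card := by
  have h1 := Finset.card_sdiff_add_card_inter A B
  have h2 := Finset.card_sdiff_add_card_inter B A
  rw [Finset.inter_comm] at h2
  omega

lemma lineDiff_congr {F1 F2 F3 : Finset (ℤ × ℤ)} (hrows : ∀ i, rowSum F2 i = rowSum F3 i)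
    (hcols : ∀ j, colSum F2 j = colSum F3 j) : lineDiff F1 F2 = lineDiff F1 F3 := by
  have hU2 : F1 ∪ F2 ⊆ F1 ∪ F2 ∪ F3 := Finset.subset_union_left
  have hU3 : F1 ∪ F3 ⊆ F1 ∪ F2 ∪ F3 := by
    intro p hp
    rcases Finset.mem_union.mp hp with h | h
    · exact Finset.mem_union_left _ (Finset.mem_union_left _ h)
    · exact Finset.mem_union_right _ h
  rw [lineDiff_eq F1 F2 (Finset.image_subset_image hU2) (Finset.image_subset_image hU2),
      lineDiff_eq F1 F3 (Finset.image_subset_image hU3) (Finset.image_subset_image hU3)]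
  congr 1
  · exact Finset.sum_congr rfl (fun j _ => by rw [hcols j])
  · exact Finset.sum_congr rfl (fun i _ => by rw [hrows i])

end Main

/-- If `F2` and `F3` have the same line sums and `F1` is uniquely determined with
`|F1| = |F2|`, then `α(F1, F2) = α(F1, F3)` and
`|F2 △ F3| ≤ 2·α(F1,F2)·√(8|F2| + 1) − 2·α(F1,F2)`. -/
theorem alpha_eq_and_symmDiff_card_le (F2 F3 F1 : Finset (ℤ × ℤ))
    (hrows : ∀ i, rowSum F2 i = rowSum F3 i) (hcols : ∀ j, colSum F2 j = colSum F3 j)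
    (hF1 : uniquelyDetermined F1) (hcard : F1.card = F2.card) :
    alpha F1 F2 = alpha F1 F3 ∧
    ((F2 ∆ F3).card : ℝ) ≤
      2 * alpha F1 F2 * Real.sqrt (8 * F2.card + 1) - 2 * alpha F1 F2 := by
  have hN := nested_of_unique hF1
  have hLD : lineDiff F1 F2 = lineDiff F1 F3 := lineDiff_congr hrows hcols
  refine ⟨by unfold alpha; rw [hLD], ?_⟩
  have h2 := main_bound F1 hN (F1 \ F2).card F2 le_rfl
  have h3 := main_bound F1 hN (F1 \ F3).card F3 le_rfl
  rw [← hLD] at h3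
  have hc3 : F1.card = F3.card := hcard.trans (card_eq_of_rowSum_eq hrows)
  have hs2 : (F1 \ F2).card = (F2 \ F1).card := sdiff_card_eq hcard
  have hs3 : (F1 \ F3).card = (F3 \ F1).card := sdiff_card_eq hc3
  have hd21 : (F2 ∆ F1).card = (F2 \ F1).card + (F1 \ F2).card := by
    rw [symmDiff_def, Finset.sup_eq_union]
    exact Finset.card_union_of_disjoint disjoint_sdiff_sdiff
  have hd13 : (F1 ∆ F3).card = (F1 \ F3).card + (F3 \ F1).card := by
    rw [symmDiff_def, Finset.sup_eq_union]
    exact Finset.card_union_of_disjoint disjoint_sdiff_sdiff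
  have htri : (F2 ∆ F3) ⊆ (F2 ∆ F1) ∪ (F1 ∆ F3) := by
    have h := symmDiff_triangle F2 F1 F3
    rw [Finset.sup_eq_union] at h
    exact h
  have hcards : (F2 ∆ F3).card ≤ (F2 ∆ F1).card + (F1 ∆ F3).card :=
    (Finset.card_le_card htri).trans (Finset.card_union_le _ _)
  have hint : ((F2 ∆ F3).card : ℤ) ≤ 2 * (lineDiff F1 F2 * (Q F1 : ℤ)) := by
    have e1 : ((F2 ∆ F3).card : ℤ) ≤ ((F2 ∆ F1).card : ℤ) + ((F1 ∆ F3).card : ℤ) := by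
      exact_mod_cast hcards
    have e2 : ((F2 ∆ F1).card : ℤ) = 2 * ((F1 \ F2).card : ℤ) := by
      rw [hd21, hs2]; push_cast; ring
    have e3 : ((F1 ∆ F3).card : ℤ) = 2 * ((F1 \ F3).card : ℤ) := by
      rw [hd13, hs3]; push_cast; ring
    omega
  have hq : Q F1 * (Q F1 + 1) ≤ 2 * F2.card := by
    have := Q_bound F1 hN
    omega
  have hL0 : (0:ℤ) ≤ lineDiff F1 F2 := lineDiff_nonneg _ _
  have hLR : (0:ℝ) ≤ (lineDiff F1 F2 : ℝ) := by exact_mod_cast hL0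
  have hsq1 : ((2 * (Q F1 : ℝ) + 1))^2 ≤ 8 * (F2.card : ℝ) + 1 := by
    have hq' : ((Q F1 : ℝ)) * ((Q F1 : ℝ) + 1) ≤ 2 * (F2.card : ℝ) := by
      exact_mod_cast hq
    nlinarith
  have hsq : 2 * (Q F1 : ℝ) + 1 ≤ Real.sqrt (8 * (F2.card : ℝ) + 1) := by
    have h0 : (0:ℝ) ≤ 2 * (Q F1 : ℝ) + 1 := by positivity
    calc 2 * (Q F1 : ℝ) + 1 = Real.sqrt ((2 * (Q F1 : ℝ) + 1)^2) := (Real.sqrt_sq h0).symm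
      _ ≤ Real.sqrt (8 * (F2.card : ℝ) + 1) := Real.sqrt_le_sqrt hsq1
  have h2a : 2 * alpha F1 F2 = (lineDiff F1 F2 : ℝ) := by
    unfold alpha; ring
  rw [h2a]
  have hintR : ((F2 ∆ F3).card : ℝ) ≤ 2 * ((lineDiff F1 F2 : ℝ) * (Q F1 : ℝ)) := by
    exact_mod_cast hint
  have hmul : (lineDiff F1 F2 : ℝ) * (2 * (Q F1 : ℝ) + 1)
      ≤ (lineDiff F1 F2 : ℝ) * Real.sqrt (8 * (F2.card : ℝ) + 1) :=
    mul_le_mul_of_nonneg_left hsq hLR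
  nlinarith [hintR, hmul, hLR]
end
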